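/- Let S be a set of positive integers, a a positive integer, and n a natural number. The total number of humps over all (S,a)-paths of order n equals the number of super (S,a)-paths of order n whose first non-horizontal step is an up step. -/

import Mathlib

/-- Steps for `(S,a)`-paths: up steps `U s = (1,s)`, down `D = (1,-1)`,
horizontal `H = (a,0)`. -/
inductive SStep : Type
  | U : ℕ → SStep
  | D : SStep
  | H : SStep
  deriving DecidableEq

/-- The displacement of a single step. -/
def sStepDisp (a : ℕ) : SStep → ℤ × ℤ
  | SStep.U s => (1, (s : ℤ))
  | SStep.D => (1, -1)
  | SStep.H => ((a : ℤ), 0)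

/-- The total displacement of a word of steps. -/
def sPathDisp (a : ℕ) (w : List SStep) : ℤ × ℤ := (w.map (sStepDisp a)).sum

/-- A super `(S,a)`-path of order `n`: a word using up steps `U s` only for `s ∈ S`,
with total displacement `(n,0)`. -/
def IsSSuperPath (S : Set ℕ) (a n : ℕ) (w : List SStep) : Prop :=
  (∀ s : ℕ, SStep.U s ∈ w → s ∈ S) ∧ sPathDisp a w = ((n : ℤ), 0)

/-- An `(S,a)`-path of order `n`: a super `(S,a)`-path all of whose partial sums have
nonnegative `y`-coordinate. -/
def IsSPath (S : Set ℕ) (a n : ℕ) (w : List SStep) : Prop :=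
  IsSSuperPath S a n w ∧ ∀ p : List SStep, p <+: w → 0 ≤ (sPathDisp a p).2

/-- The first letter different from `H` exists and is an up step. -/
def SFirstNonHIsU (w : List SStep) : Prop :=
  ∃ (l : ℕ) (s : ℕ) (r : List SStep), w = List.replicate l SStep.H ++ SStep.U s :: r

/-- There is a hump (a factor `U_s H^j D` for some `s` and `j ≥ 0`) starting at
position `i` of `w`. -/
def IsSHumpAt (w : List SStep) (i : ℕ) : Prop :=
  ∃ (s j : ℕ), (SStep.U s :: (List.replicate j SStep.H ++ [SStep.D])) <+: w.drop i

namespace St5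

def ht (a : ℕ) (w : List SStep) : ℤ := (sPathDisp a w).2

@[simp] lemma sPathDisp_nil (a : ℕ) : sPathDisp a [] = 0 := rfl

@[simp] lemma sPathDisp_cons (a : ℕ) (x : SStep) (u : List SStep) :
    sPathDisp a (x :: u) = sStepDisp a x + sPathDisp a u := by
  simp [sPathDisp]

@[simp] lemma sPathDisp_append (a : ℕ) (u v : List SStep) :
    sPathDisp a (u ++ v) = sPathDisp a u + sPathDisp a v := by
  simp [sPathDisp]

@[simp] lemma sPathDisp_replicate_H (a : ℕ) (l : ℕ) :
    sPathDisp a (List.replicate l SStep.H) = ((l : ℤ) * a, 0) := by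
  induction l with
  | zero => simp; rfl
  | succ m ih => simp [List.replicate_succ, ih, sStepDisp]; ring

@[simp] lemma ht_nil (a : ℕ) : ht a [] = 0 := rfl

@[simp] lemma ht_cons (a : ℕ) (x : SStep) (u : List SStep) :
    ht a (x :: u) = (sStepDisp a x).2 + ht a u := by simp [ht]

@[simp] lemma ht_append (a : ℕ) (u v : List SStep) :
    ht a (u ++ v) = ht a u + ht a v := by simp [ht]

@[simp] lemma ht_replicate_H (a : ℕ) (l : ℕ) :
    ht a (List.replicate l SStep.H) = 0 := by simp [ht]

@[simp] lemma snd_U (a s : ℕ) : (sStepDisp a (SStep.U s)).2 = (s : ℤ) := rfl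
@[simp] lemma snd_D (a : ℕ) : (sStepDisp a SStep.D).2 = -1 := rfl
@[simp] lemma snd_H (a : ℕ) : (sStepDisp a SStep.H).2 = 0 := rfl

lemma ht_take_add_drop (a : ℕ) (k : ℕ) (B : List SStep) :
    ht a (B.take k) + ht a (B.drop k) = ht a B := by
  rw [← ht_append, List.take_append_drop]

/-- takeWhile of `H^j ++ D :: B` is `H^j`. -/
lemma takeWhile_repHD (j : ℕ) (B : List SStep) :
    ((List.replicate j SStep.H ++ SStep.D :: B).takeWhile (fun x => x == SStep.H))
      = List.replicate j SStep.H := by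
  induction j with
  | zero => rfl
  | succ m ih => simpa [List.replicate_succ, List.takeWhile_cons] using ih

lemma drop_repHD (j : ℕ) (B : List SStep) :
    (List.replicate j SStep.H ++ SStep.D :: B).drop (j + 1) = B := by
  induction j with
  | zero => simp
  | succ m ih => simpa [List.replicate_succ] using ih

lemma rep_cons_inj {j j' s s' : ℕ} {u u' : List SStep}
    (h : List.replicate j SStep.H ++ SStep.U s :: u
        = List.replicate j' SStep.H ++ SStep.U s' :: u') :
    j = j' ∧ s = s' ∧ u = u' := by
  induction j generalizing j' with
  | zero =>
    cases j' with
    | zero => simpa using h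
    | succ m => simp [List.replicate_succ] at h
  | succ m ih =>
    cases j' with
    | zero => simp [List.replicate_succ] at h
    | succ m' =>
      simp only [List.replicate_succ, List.cons_append, List.cons.injEq] at h
      obtain ⟨-, h⟩ := h
      obtain ⟨h1, h2, h3⟩ := ih h
      exact ⟨by omega, h2, h3⟩


/-- take of the super-path word at offset `l+1+k`. -/
lemma take_w (l s : ℕ) (r : List SStep) (k : ℕ) :
    (List.replicate l SStep.H ++ SStep.U s :: r).take (l + 1 + k)
      = List.replicate l SStep.H ++ SStep.U s :: r.take k := by
  have h : l + 1 + k = (List.replicate l SStep.H).length + (k + 1) := by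
    simp; omega
  rw [h, List.take_length_add_append, List.take_succ_cons]

lemma take_BDA_le {k : ℕ} (B z : List SStep) (hk : k ≤ B.length) :
    (B ++ z).take k = B.take k := by
  rw [List.take_append_of_le_length hk]

lemma take_BDA_ge (B A : List SStep) (k : ℕ) :
    (B ++ SStep.D :: A).take (B.length + 1 + k)
      = B ++ SStep.D :: A.take k := by
  have h : B.length + 1 + k = B.length + (k + 1) := by omega
  rw [h, List.take_length_add_append, List.take_succ_cons]

/-- Key characterization: in `w = H^l U_s B D A` with the side conditions,
the position `t1 = l+1+|B|+1` is the strict first minimum of heights among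
positions `≥ l+1`. -/
lemma keyB (a l s : ℕ) (B A : List SStep) (hs : 1 ≤ s)
    (hB : ∀ k, ht a (B.drop k) ≤ 0) (hA : ∀ k, 0 ≤ ht a (A.take k)) :
    (∀ q, l + 1 ≤ q →
      ht a ((List.replicate l SStep.H ++ SStep.U s :: (B ++ SStep.D :: A)).take
        (l + 1 + B.length + 1))
      ≤ ht a ((List.replicate l SStep.H ++ SStep.U s :: (B ++ SStep.D :: A)).take q)) ∧
    (∀ p, l + 1 ≤ p → p < l + 1 + B.length + 1 →
      ht a ((List.replicate l SStep.H ++ SStep.U s :: (B ++ SStep.D :: A)).take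
        (l + 1 + B.length + 1))
      < ht a ((List.replicate l SStep.H ++ SStep.U s :: (B ++ SStep.D :: A)).take p)) := by
  set w := List.replicate l SStep.H ++ SStep.U s :: (B ++ SStep.D :: A) with hw
  have ht1 : ht a (w.take (l + 1 + B.length + 1)) = (s : ℤ) + ht a B - 1 := by
    have h1 : l + 1 + B.length + 1 = l + 1 + (B.length + 1 + 0) := by omega
    rw [hw, h1, take_w, take_BDA_ge]
    simp
    ring
  have hlt : ∀ k, k ≤ B.length →
      ht a (w.take (l + 1 + B.length + 1)) < ht a (w.take (l + 1 + k)) := by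
    intro k hk
    rw [ht1, hw, take_w, take_BDA_le _ _ hk]
    have h2 := ht_take_add_drop a k B
    have h3 := hB k
    simp
    linarith
  constructor
  · intro q hq
    rcases le_or_gt q (l + 1 + B.length) with hq2 | hq2
    · obtain ⟨k, hk, rfl⟩ : ∃ k, k ≤ B.length ∧ q = l + 1 + k :=
        ⟨q - (l + 1), by omega, by omega⟩
      exact le_of_lt (hlt k hk)
    · obtain ⟨k, rfl⟩ : ∃ k, q = l + 1 + (B.length + 1 + k) :=
        ⟨q - (l + 1 + B.length + 1), by omega⟩
      have h1 : l + 1 + B.length + 1 = l + 1 + (B.length + 1 + 0) := by omega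
      rw [ht1, hw, take_w, take_BDA_ge]
      have := hA k
      simp
      linarith
  · intro p hp hp2
    obtain ⟨k, hk, rfl⟩ : ∃ k, k ≤ B.length ∧ p = l + 1 + k :=
      ⟨p - (l + 1), by omega, by omega⟩
    exact hlt k hk


/-- The bijection: given a path with a marked hump `A (U_s H^j D) B`,
produce the super path `H^j U_s B D A`. -/
def phi (Lp : List SStep × ℕ) : List SStep :=
  match Lp.1.drop Lp.2 with
  | SStep.U s :: rest =>
      let j := (rest.takeWhile (fun x => x == SStep.H)).length
      List.replicate j SStep.H ++
        SStep.U s :: (rest.drop (j + 1) ++ SStep.D :: Lp.1.take Lp.2)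
  | _ => []

lemma phi_eq (A : List SStep) (s j : ℕ) (B : List SStep) :
    phi (A ++ SStep.U s :: (List.replicate j SStep.H ++ SStep.D :: B), A.length)
      = List.replicate j SStep.H ++ SStep.U s :: (B ++ SStep.D :: A) := by
  have hd : (A ++ SStep.U s :: (List.replicate j SStep.H ++ SStep.D :: B)).drop A.length
      = SStep.U s :: (List.replicate j SStep.H ++ SStep.D :: B) := List.drop_left
  have htk : (A ++ SStep.U s :: (List.replicate j SStep.H ++ SStep.D :: B)).take A.length
      = A := List.take_left
  rw [phi]
  rw [hd, htk]
  simp only [takeWhile_repHD, List.length_replicate, drop_repHD]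


lemma take_mid (A : List SStep) (x : SStep) (z : List SStep) (k : ℕ) :
    (A ++ x :: z).take (A.length + 1 + k) = A ++ x :: z.take k := by
  have h : A.length + 1 + k = A.length + (k + 1) := by omega
  rw [h, List.take_length_add_append, List.take_succ_cons]

/-- Nonnegativity of all prefixes of the reconstructed path `A U_s H^l D B`. -/
lemma keyC (a l s : ℕ) (B A : List SStep) (hs : 1 ≤ s)
    (hB : ∀ k, ht a (B.drop k) ≤ 0) (hA : ∀ k, 0 ≤ ht a (A.take k))
    (hsum : (s : ℤ) + ht a B - 1 + ht a A = 0) :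
    ∀ k, 0 ≤ ht a ((A ++ SStep.U s :: (List.replicate l SStep.H ++ SStep.D :: B)).take k) := by
  intro k
  have hA0 : 0 ≤ ht a A := by have := hA A.length; rwa [List.take_length] at this
  rcases le_or_gt k A.length with hk | hk
  · rw [List.take_append_of_le_length hk]
    exact hA k
  · obtain ⟨k2, rfl⟩ : ∃ k2, k = A.length + 1 + k2 := ⟨k - A.length - 1, by omega⟩
    rw [take_mid]
    rcases le_or_gt k2 l with hk2 | hk2
    · rw [List.take_append_of_le_length (by simpa using hk2), List.take_replicate]
      simp
      linarith
    · obtain ⟨k3, rfl⟩ : ∃ k3, k2 = l + 1 + k3 := ⟨k2 - l - 1, by omega⟩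
      have h1 : (List.replicate l SStep.H ++ SStep.D :: B).take (l + 1 + k3)
          = List.replicate l SStep.H ++ SStep.D :: B.take k3 := by
        have := take_mid (List.replicate l SStep.H) SStep.D B k3
        simpa using this
      rw [h1]
      have h2 := ht_take_add_drop a k3 B
      have h3 := hB k3
      simp
      linarith


lemma mem_decomp (S : Set ℕ) (hS : ∀ s ∈ S, 0 < s) (a n : ℕ) (P : List SStep) (i : ℕ)
    (h1 : IsSPath S a n P) (h2 : IsSHumpAt P i) :
    ∃ A : List SStep, ∃ s j : ℕ, ∃ B : List SStep,
      P = A ++ SStep.U s :: (List.replicate j SStep.H ++ SStep.D :: B) ∧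
      i = A.length ∧
      phi (P, i) = List.replicate j SStep.H ++ SStep.U s :: (B ++ SStep.D :: A) ∧
      1 ≤ s ∧
      (∀ k, 0 ≤ ht a (A.take k)) ∧
      (∀ k, ht a (B.drop k) ≤ 0) := by
  obtain ⟨s, j, B, hB⟩ := h2
  -- hB : P.drop i = (U s :: (replicate j H ++ [D])) ++ B
  have hiP : i < P.length := by
    by_contra hcon
    push_neg at hcon
    rw [List.drop_eq_nil_of_le hcon] at hB
    simp at hB
  have hP : P = P.take i ++ SStep.U s :: (List.replicate j SStep.H ++ SStep.D :: B) := by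
    conv_lhs => rw [← List.take_append_drop i P]
    rw [← hB]
    simp
  have hilen : i = (P.take i).length := by
    rw [List.length_take]
    omega
  have hpref : ∀ p : List SStep, p <+: P → 0 ≤ ht a p := h1.2
  have htP : ht a P = 0 := by rw [ht, h1.1.2]
  refine ⟨P.take i, s, j, B, hP, hilen, ?_, ?_, ?_, ?_⟩
  · have h3 := phi_eq (P.take i) s j B
    rw [← hP, ← hilen] at h3
    exact h3
  · refine hS s (h1.1.1 s ?_)
    rw [hP]
    simp
  · intro k
    refine hpref _ (List.IsPrefix.trans (List.take_prefix k _) ?_)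
    exact ⟨_, hP.symm⟩
  · intro k
    have hP2 : P = (P.take i ++ SStep.U s :: (List.replicate j SStep.H ++ SStep.D :: B.take k))
        ++ B.drop k := by
      conv_lhs => rw [hP]
      conv_lhs => rw [← List.take_append_drop k B]
      simp
    have hu := hpref _ ⟨B.drop k, hP2.symm⟩
    have := congrArg (ht a) hP2
    rw [ht_append] at this
    rw [htP] at this
    linarith

lemma surj (S : Set ℕ) (hS : ∀ s ∈ S, 0 < s) (a n : ℕ) (w : List SStep)
    (hw : IsSSuperPath S a n w) (hfirst : SFirstNonHIsU w) :
    ∃ P : List SStep, ∃ i : ℕ, (IsSPath S a n P ∧ IsSHumpAt P i) ∧ phi (P, i) = w := by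
  classical
  obtain ⟨l, s, r, rfl⟩ := hfirst
  set w := List.replicate l SStep.H ++ SStep.U s :: r with hwdef
  have hlen : w.length = l + 1 + r.length := by
    rw [hwdef]; simp; omega
  have hs1 : 1 ≤ s := hS s (hw.1 s (by rw [hwdef]; simp))
  have hw0 : ht a w = 0 := by rw [ht, hw.2]
  -- the first minimum position among positions ≥ l+1
  have hex : ∃ p, l + 1 ≤ p ∧ p ≤ w.length ∧
      ∀ q, l + 1 ≤ q → q ≤ w.length → ht a (w.take p) ≤ ht a (w.take q) := by
    obtain ⟨p, hp, hmin⟩ := Finset.exists_min_image (Finset.Icc (l+1) w.length)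
      (fun q => ht a (w.take q)) ⟨l+1, by simp [Finset.mem_Icc]; omega⟩
    simp only [Finset.mem_Icc] at hp
    exact ⟨p, hp.1, hp.2, fun q hq1 hq2 => hmin q (Finset.mem_Icc.2 ⟨hq1, hq2⟩)⟩
  set t1 := Nat.find hex with ht1def
  obtain ⟨ht1a, ht1b, ht1c⟩ := Nat.find_spec hex
  rw [← ht1def] at ht1a ht1b ht1c
  have hminall : ∀ q, l + 1 ≤ q → ht a (w.take t1) ≤ ht a (w.take q) := by
    intro q hq
    rcases le_or_gt q w.length with h | h
    · exact ht1c q hq h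
    · rw [List.take_of_length_le (le_of_lt h)]
      have := ht1c w.length (by omega) le_rfl
      rwa [List.take_length] at this
  have hstrict : ∀ p, l + 1 ≤ p → p < t1 → ht a (w.take t1) < ht a (w.take p) := by
    intro p hp hpt
    have hnp := Nat.find_min hex hpt
    by_contra hcon
    push_neg at hcon
    exact hnp ⟨hp, le_trans (le_of_lt hpt) ht1b,
      fun q hq1 hq2 => le_trans hcon (ht1c q hq1 hq2)⟩
  have hFl1 : ht a (w.take (l + 1)) = (s : ℤ) := by
    have h := take_w l s r 0
    rw [add_zero] at h
    rw [hwdef, h]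
    simp
  have hlt1 : l + 1 < t1 := by
    have h0 : ht a (w.take t1) ≤ 0 := by
      have := ht1c w.length (by omega) le_rfl
      rwa [List.take_length, hw0] at this
    rcases lt_or_eq_of_le ht1a with h | h
    · exact h
    · rw [← h, hFl1] at h0
      exfalso
      have : (1 : ℤ) ≤ (s : ℤ) := by exact_mod_cast hs1
      linarith
  have hD : t1 - 1 < w.length := by omega
  have hFsucc : ht a (w.take t1) = ht a (w.take (t1 - 1)) + (sStepDisp a (w[t1-1])).2 := by
    have h2 : w.take t1 = w.take (t1 - 1) ++ [w[t1-1]] := by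
      have h3 : t1 = (t1 - 1) + 1 := by omega
      conv_lhs => rw [h3]
      rw [List.take_succ]
      simp [List.getElem?_eq_getElem hD]
    rw [h2, ht_append]
    simp
  have hstep : ht a (w.take t1) < ht a (w.take (t1 - 1)) :=
    hstrict (t1 - 1) (by omega) (by omega)
  have hgetD : w[t1-1] = SStep.D := by
    rcases h : w[t1-1] with s' | _ | _
    · rw [h] at hFsucc
      simp at hFsucc
      have : (0 : ℤ) ≤ (s' : ℤ) := by positivity
      linarith
    · rfl
    · rw [h] at hFsucc
      simp at hFsucc
      linarith
  set k := t1 - 1 - (l + 1) with hkdef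
  set A := w.drop t1 with hAdef
  set B := r.take k with hBdef
  have hk_r : k < r.length := by omega
  have hBlen : B.length = k := by rw [hBdef, List.length_take]; omega
  have hdrop_lk : w.drop (l + 1 + k) = r.drop k := by
    rw [hwdef]
    have h1 : l + 1 + k = (List.replicate l SStep.H).length + (k + 1) := by simp; omega
    rw [h1, List.drop_length_add_append, List.drop_succ_cons]
  have hl1k : l + 1 + k = t1 - 1 := by omega
  have hrsplit : r = B ++ SStep.D :: A := by
    conv_lhs => rw [← List.take_append_drop k r]
    rw [← hBdef]
    congr 1
    rw [← hdrop_lk, hl1k, List.drop_eq_getElem_cons hD, hgetD]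
    congr 1
    rw [hAdef]
    congr 1
    omega
  have hwsplit : w = List.replicate l SStep.H ++ SStep.U s :: (B ++ SStep.D :: A) := by
    rw [hwdef]
    conv_lhs => rw [hrsplit]
  have ht1val : t1 = l + 1 + B.length + 1 := by omega
  have hFt1 : ht a (w.take t1) = (s : ℤ) + ht a B - 1 := by
    rw [ht1val, hwsplit]
    have h1 : l + 1 + B.length + 1 = l + 1 + (B.length + 1 + 0) := by omega
    rw [h1, take_w, take_BDA_ge]
    simp
    ring
  have hA' : ∀ k3, 0 ≤ ht a (A.take k3) := by
    intro k3
    have h := hminall (l + 1 + (B.length + 1 + k3)) (by omega)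
    rw [hFt1] at h
    conv at h => rw [hwsplit, take_w, take_BDA_ge]
    simp at h
    linarith
  have hB' : ∀ k2, ht a (B.drop k2) ≤ 0 := by
    intro k2
    by_cases hk2 : k2 ≤ B.length
    · have h := hstrict (l + 1 + k2) (by omega) (by omega)
      rw [hFt1] at h
      conv at h => rw [hwsplit, take_w, take_BDA_le _ _ hk2]
      simp at h
      have h2 := ht_take_add_drop a k2 B
      linarith
    · rw [List.drop_eq_nil_of_le (by omega)]
      simp
  have hsum : (s : ℤ) + ht a B - 1 + ht a A = 0 := by
    rw [hwsplit] at hw0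
    simp at hw0
    linarith
  refine ⟨A ++ SStep.U s :: (List.replicate l SStep.H ++ SStep.D :: B), A.length,
    ⟨⟨⟨?_, ?_⟩, ?_⟩, ?_⟩, ?_⟩
  · intro s' hm
    refine hw.1 s' ?_
    rw [hwsplit]
    simp only [List.mem_append, List.mem_cons, List.mem_replicate] at hm ⊢
    tauto
  · have heq : sPathDisp a (A ++ SStep.U s :: (List.replicate l SStep.H ++ SStep.D :: B))
        = sPathDisp a w := by
      rw [hwsplit]
      simp only [sPathDisp_append, sPathDisp_cons]
      abel
    rw [heq, hw.2]
  · intro p hp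
    obtain ⟨v, hv⟩ := hp
    have hptake : p = (A ++ SStep.U s :: (List.replicate l SStep.H ++ SStep.D :: B)).take
        p.length := by
      rw [← hv, List.take_left]
    have := keyC a l s B A hs1 hB' hA' hsum p.length
    rw [← hptake] at this
    exact this
  · exact ⟨s, l, ⟨B, by rw [List.drop_left]; simp⟩⟩
  · rw [phi_eq]
    exact hwsplit.symm


lemma injOn (S : Set ℕ) (hS : ∀ s ∈ S, 0 < s) (a n : ℕ) :
    Set.InjOn phi {Lp : List SStep × ℕ | IsSPath S a n Lp.1 ∧ IsSHumpAt Lp.1 Lp.2} := by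
  rintro ⟨P, i⟩ h1 ⟨P', i'⟩ h2 heq
  obtain ⟨A, s, j, B, hPeq, hieq, hphi, hs1, hA, hB⟩ :=
    mem_decomp S hS a n P i h1.1 h1.2
  obtain ⟨A', s', j', B', hPeq', hieq', hphi', hs1', hA', hB'⟩ :=
    mem_decomp S hS a n P' i' h2.1 h2.2
  rw [hphi, hphi'] at heq
  obtain ⟨rfl, rfl, hBDA⟩ := rep_cons_inj heq
  obtain ⟨K1, K2⟩ := keyB a j s B A hs1 hB hA
  obtain ⟨K1', K2'⟩ := keyB a j s B' A' hs1' hB' hA'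
  rw [← hBDA] at K1' K2'
  have hlenB : B.length = B'.length := by
    rcases lt_trichotomy B.length B'.length with h | h | h
    · exfalso
      have c1 := K2' (j + 1 + B.length + 1) (by omega) (by omega)
      have c2 := K1 (j + 1 + B'.length + 1) (by omega)
      linarith
    · exact h
    · exfalso
      have c1 := K2 (j + 1 + B'.length + 1) (by omega) (by omega)
      have c2 := K1' (j + 1 + B.length + 1) (by omega)
      linarith
  obtain ⟨rfl, hDA⟩ := List.append_inj hBDA hlenB
  have hAA : A = A' := by simpa using hDA
  subst hAA
  have : P = P' := by rw [hPeq, hPeq']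
  simp [this, hieq, hieq']

end St5

/-- The total number of humps over all `(S,a)`-paths of order `n` equals the number of
super `(S,a)`-paths of order `n` whose first non-horizontal step is an up step. -/
theorem stmt5 (S : Set ℕ) (hS : ∀ s ∈ S, 0 < s) (a n : ℕ) (ha : 0 < a) :
    {Lp : List SStep × ℕ | IsSPath S a n Lp.1 ∧ IsSHumpAt Lp.1 Lp.2}.ncard =
      {w : List SStep | IsSSuperPath S a n w ∧ SFirstNonHIsU w}.ncard := by
  classical
  have himg : St5.phi '' {Lp : List SStep × ℕ | IsSPath S a n Lp.1 ∧ IsSHumpAt Lp.1 Lp.2}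
      = {w : List SStep | IsSSuperPath S a n w ∧ SFirstNonHIsU w} := by
    ext w
    constructor
    · rintro ⟨⟨P, i⟩, hmem, rfl⟩
      obtain ⟨A, s, j, B, hPeq, hieq, hphi, hs1, hA, hB⟩ :=
        St5.mem_decomp S hS a n P i hmem.1 hmem.2
      rw [hphi]
      refine ⟨⟨?_, ?_⟩, ⟨j, s, _, rfl⟩⟩
      · intro s' hm
        refine hmem.1.1.1 s' ?_
        rw [hPeq]
        simp only [List.mem_append, List.mem_cons, List.mem_replicate] at hm ⊢
        tauto
      · have heq2 : sPathDisp a (List.replicate j SStep.H ++ SStep.U s :: (B ++ SStep.D :: A))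
            = sPathDisp a P := by
          rw [hPeq]
          simp only [St5.sPathDisp_append, St5.sPathDisp_cons]
          abel
        rw [heq2]
        exact hmem.1.1.2
    · rintro ⟨hsuper, hfirst⟩
      obtain ⟨P, i, hmem, hphi⟩ := St5.surj S hS a n w hsuper hfirst
      exact ⟨(P, i), hmem, hphi⟩
  rw [← himg, Set.ncard_image_of_injOn (St5.injOn S hS a n)]
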